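/- For all r ≥ 1, j ≥ 1, and n ≥ 1, p^r_j(n) = p^{r−1}_j(n) + ∑_{s=0}^{n−1} C(n,s) · p^{r−1}_j(s), where p^r_j(n) := ∑_{s=0}^{n} C(n,s) · J^{j−1}_s · r^{n−s}. -/

import Mathlib

/-- Stirling numbers of the second kind. -/
def stirling : ℕ → ℕ → ℕ
  | 0, 0 => 1
  | 0, _ + 1 => 0
  | _ + 1, 0 => 0
  | n + 1, s + 1 => (s + 1) * stirling n (s + 1) + stirling n s

/-- `J k n`: the number of barred preferential arrangements of an `n`-set with `k` bars,
given by its closed form `∑ S(n,s)·s!·C(k+s,s)`. -/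
def J (k n : ℕ) : ℕ :=
  ∑ s ∈ Finset.range (n + 1), stirling n s * s.factorial * (k + s).choose s

/-- `P r j n`: barred preferential arrangements of an `n`-set with `r + j - 1` bars,
with `r` restricted sections and `j` free sections. -/
def P (r : ℕ) : ℕ → ℕ → ℕ
  | 0, n => r ^ n
  | j + 1, n => ∑ s ∈ Finset.range (n + 1), n.choose s * J j s * r ^ (n - s)

lemma pow_sum_aux (r m : ℕ) (hr : 1 ≤ r) :
    ∑ i ∈ Finset.range (m + 1), m.choose i * (r - 1) ^ i = r ^ m := by
  conv_rhs => rw [← Nat.sub_add_cancel hr, add_pow]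
  exact Finset.sum_congr rfl fun i _ => by simp [mul_comm]

lemma key_aux (r j n : ℕ) (hr : 1 ≤ r) :
    ∑ s ∈ Finset.range (n + 1), n.choose s * P (r - 1) j s = P r j n := by
  cases j with
  | zero => simpa [P] using pow_sum_aux r n hr
  | succ k =>
    simp only [P]
    simp only [Finset.mul_sum]
    simp only [Finset.range_eq_Ico]
    rw [← Finset.sum_Ico_Ico_comm]
    refine Finset.sum_congr rfl fun t ht => ?_
    simp only [Finset.mem_Ico] at ht
    have htn : t ≤ n := by omega
    rw [Finset.sum_Ico_eq_sum_range]
    have : ∀ i ∈ Finset.range (n + 1 - t),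
        n.choose (t + i) * ((t + i).choose t * J k t * (r - 1) ^ (t + i - t)) =
          n.choose t * J k t * ((n - t).choose i * (r - 1) ^ i) := by
      intro i hi
      simp only [Finset.mem_range] at hi
      have h1 : t + i ≤ n := by omega
      have := Nat.choose_mul (n := n) (Nat.le_add_right t i)
      rw [Nat.add_sub_cancel_left] at this
      calc n.choose (t + i) * ((t + i).choose t * J k t * (r - 1) ^ (t + i - t))
          = n.choose (t + i) * (t + i).choose t * J k t * (r - 1) ^ i := by
            rw [Nat.add_sub_cancel_left]; ring
        _ = n.choose t * (n - t).choose i * J k t * (r - 1) ^ i := by rw [this]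
        _ = n.choose t * J k t * ((n - t).choose i * (r - 1) ^ i) := by ring
    rw [Finset.sum_congr rfl this, ← Finset.mul_sum]
    have hrange : n + 1 - t = (n - t) + 1 := by omega
    rw [hrange, pow_sum_aux r (n - t) hr]

theorem stmt_12 (r j n : ℕ) (hr : 1 ≤ r) (hj : 1 ≤ j) (hn : 1 ≤ n) :
    P r j n = P (r - 1) j n + ∑ s ∈ Finset.range n, n.choose s * P (r - 1) j s := by
  rw [← key_aux r j n hr, Finset.sum_range_succ, Nat.choose_self, one_mul, Nat.add_comm]
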